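/- arXiv:1310.1765 — 2 statements merged into one kernel-verified Lean document; each statement's English description precedes it below -/
import Mathlib

section
/- Assume d is not a square in F, and suppose u₀ ∈ o satisfies c·u₀² + b·u₀ + a ∈ p and b + 2c·u₀ ∈ p, while a + bu + cu² ∈ o^× for every u ∈ o with u − u₀ ∉ p. Let χ : F^× → ℂ^× be a group homomorphism trivial on o^×, and let Ω : T(F) → ℂ^× be a group homomorphism with conductor exponent C := c(Ω) and with Ω(z·1) = χ(z)² for all z ∈ F^×. Let B : GL₂(F) → ℂ satisfy: (E) B(t·g·k) = Ω(t)·B(g) for all t ∈ T(F), g ∈ GL₂(F), k ∈ I; (N) for every set R ⊆ o of representatives of o/p and every g ∈ GL₂(F), ∑_{u ∈ R} B(g·[[1, 0], [u, 1]]) = −B(g·w); (A) B(g·[[0, 1], [ϖ, 0]]) = −χ(ϖ)·B(g) for all g ∈ GL₂(F). Then B([[1, 0], [u₀, 1]]) = −q·B(w) if C = 0, and B([[1, 0], [u₀, 1]]) = 0 if C > 0. -/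
open Matrix

noncomputable section

abbrev Zm0 : Type := WithZero (Multiplicative ℤ)

/-- `ev n` is the value (in `ℤₘ₀ = WithZero (Multiplicative ℤ)`) of an element of additive
valuation `n`; thus `x ∈ 𝔭^n` iff `v x ≤ ev n`, `x ∈ 𝔬` iff `v x ≤ ev 0`, and `x ∈ 𝔬^×` iff
`v x = ev 0`. -/
def ev (n : ℤ) : Zm0 := ((Multiplicative.ofAdd (-n) : Multiplicative ℤ) : Zm0)

variable {F : Type*} [Field F]

/-- the matrix t(x,y) = [[x, cy],[−ay, x−by]] -/
def tmat (a b c x y : F) : Matrix (Fin 2) (Fin 2) F :=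
  !![x, c * y; -(a * y), x - b * y]

/-- the torus T(F) ⊆ GL₂(F), as a set of matrices -/
def TSet (a b c : F) : Set (Matrix (Fin 2) (Fin 2) F) :=
  {m | ∃ x y : F, x ^ 2 - b * x * y + a * c * y ^ 2 ≠ 0 ∧ m = tmat a b c x y}

def wmat (F : Type*) [Field F] : Matrix (Fin 2) (Fin 2) F := !![0, 1; -1, 0]

/-- GL₂(𝔬) : integral entries and unit determinant -/
def GL2O (v : Valuation F Zm0) : Set (Matrix (Fin 2) (Fin 2) F) :=
  {g | (∀ i j, v (g i j) ≤ ev 0) ∧ v g.det = ev 0}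

/-- the Iwahori subgroup I = { g ∈ GL₂(𝔬) : g₂₁ ∈ 𝔭 } -/
def Iwahori (v : Valuation F Zm0) : Set (Matrix (Fin 2) (Fin 2) F) :=
  {g | g ∈ GL2O v ∧ v (g 1 0) ≤ ev 1}

/-- membership in U_m ⊆ T(F): U_0 = T(F) ∩ GL₂(𝔬), and for m ≥ 1,
U_m = { t ∈ T(F) : t − 1 ∈ ϖ^m·M₂(𝔬) } -/
def Umem (v : Valuation F Zm0) (a b c : F) (m : ℕ) (t : Matrix (Fin 2) (Fin 2) F) : Prop :=
  t ∈ TSet a b c ∧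
    (if m = 0 then (∀ i j, v (t i j) ≤ ev 0) ∧ v t.det = ev 0
     else ∀ i j, v ((t - 1) i j) ≤ ev m)


lemma ev0 : ev 0 = 1 := rfl

lemma ev_one_le : ev 1 ≤ ev 0 := by
  rw [ev, ev, WithZero.coe_le_coe]; exact Multiplicative.ofAdd_le.mpr (by norm_num)

lemma vadd (v : Valuation F Zm0) {x y : F} {g : Zm0} (hx : v x ≤ g) (hy : v y ≤ g) :
    v (x + y) ≤ g := le_trans (v.map_add x y) (max_le hx hy)

lemma vsub (v : Valuation F Zm0) {x y : F} {g : Zm0} (hx : v x ≤ g) (hy : v y ≤ g) :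
    v (x - y) ≤ g := by
  rw [sub_eq_add_neg]; exact vadd v hx (by rwa [v.map_neg])

lemma vmul (v : Valuation F Zm0) {x y : F} (hx : v x ≤ ev 0) (hy : v y ≤ ev 0) :
    v (x * y) ≤ ev 0 := by
  rw [v.map_mul, ev0] at *; exact mul_le_one' hx hy

lemma vmulp (v : Valuation F Zm0) {x y : F} (hx : v x ≤ ev 0) (hy : v y ≤ ev 1) :
    v (x * y) ≤ ev 1 := by
  rw [v.map_mul]
  calc v x * v y ≤ 1 * ev 1 := mul_le_mul' (ev0 ▸ hx) hy
    _ = ev 1 := one_mul _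

lemma unit_ne_zero (v : Valuation F Zm0) {x : F} (h : v x = ev 0) : x ≠ 0 := by
  intro h0; rw [h0, v.map_zero, ev0] at h; exact zero_ne_one h

lemma entries_of (v : Valuation F Zm0) {m : Matrix (Fin 2) (Fin 2) F} {g : Zm0}
    (h00 : v (m 0 0) ≤ g) (h01 : v (m 0 1) ≤ g) (h10 : v (m 1 0) ≤ g)
    (h11 : v (m 1 1) ≤ g) : ∀ i j, v (m i j) ≤ g := by
  intro i j; fin_cases i <;> fin_cases j <;> assumption

lemma mem_iwahori (v : Valuation F Zm0) {m : Matrix (Fin 2) (Fin 2) F}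
    (h00 : v (m 0 0) ≤ ev 0) (h01 : v (m 0 1) ≤ ev 0) (h10 : v (m 1 0) ≤ ev 1)
    (h11 : v (m 1 1) ≤ ev 0) (hdet : v m.det = ev 0) : m ∈ Iwahori v :=
  ⟨⟨entries_of v h00 h01 (le_trans h10 ev_one_le) h11, hdet⟩, h10⟩

@[simp] lemma tmat00 (a b c x y : F) : tmat a b c x y 0 0 = x := by simp [tmat]
@[simp] lemma tmat01 (a b c x y : F) : tmat a b c x y 0 1 = c * y := by simp [tmat]
@[simp] lemma tmat10 (a b c x y : F) : tmat a b c x y 1 0 = -(a * y) := by simp [tmat]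
@[simp] lemma tmat11 (a b c x y : F) : tmat a b c x y 1 1 = x - b * y := by simp [tmat]

/-- in the ramified case (with residual double root u₀),
B([[1,0],[u₀,1]]) = −q·B(w) if c(Ω) = 0, and = 0 if c(Ω) > 0. -/
theorem stmt12
    (v : Valuation F Zm0) (ϖ : F) (hϖ : v ϖ = ev 1)
    (a b c : F)
    (hao : v a ≤ ev 0) (hbo : v b ≤ ev 0) (hc : v c = ev 0)
    (hd0 : b ^ 2 - 4 * (a * c) ≠ 0)
    (hnonsq : ∀ s : F, s ^ 2 ≠ b ^ 2 - 4 * (a * c))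
    -- the element u₀ :
    (u₀ : F) (hu₀o : v u₀ ≤ ev 0)
    (hu₀ : v (c * u₀ ^ 2 + b * u₀ + a) ≤ ev 1)
    (hu₀' : v (b + 2 * c * u₀) ≤ ev 1)
    (hother : ∀ u : F, v u ≤ ev 0 → ¬ v (u - u₀) ≤ ev 1 → v (a + b * u + c * u ^ 2) = ev 0)
    -- q is the cardinality of the residue field 𝔬/𝔭 :
    (q : ℕ) (hq : ∃ R : Finset F, R.card = q ∧ (∀ r ∈ R, v r ≤ ev 0) ∧
      ∀ x : F, v x ≤ ev 0 → ∃! r, r ∈ R ∧ v (x - r) ≤ ev 1)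
    -- χ : F^× → ℂ^× a homomorphism trivial on 𝔬^× :
    (χ : F → ℂ)
    (hχmul : ∀ x y : F, x ≠ 0 → y ≠ 0 → χ (x * y) = χ x * χ y)
    (hχne : ∀ x : F, x ≠ 0 → χ x ≠ 0)
    (hχtriv : ∀ u : F, v u = ev 0 → χ u = 1)
    -- Ω : T(F) → ℂ^× a homomorphism with conductor exponent C and Ω(z·1) = χ(z)² :
    (Ω : Matrix (Fin 2) (Fin 2) F → ℂ)
    (hΩmul : ∀ s t, s ∈ TSet a b c → t ∈ TSet a b c → Ω (s * t) = Ω s * Ω t)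
    (hΩne : ∀ t ∈ TSet a b c, Ω t ≠ 0)
    (C : ℕ)
    (hcond : ∀ t, Umem v a b c C t → Ω t = 1)
    (hleast : ∀ m : ℕ, m < C → ∃ t, Umem v a b c m t ∧ Ω t ≠ 1)
    (hcent : ∀ z : F, z ≠ 0 → Ω (z • (1 : Matrix (Fin 2) (Fin 2) F)) = (χ z) ^ 2)
    (B : Matrix (Fin 2) (Fin 2) F → ℂ)
    -- (E) equivariance :
    (hE : ∀ t g k, t ∈ TSet a b c → k ∈ Iwahori v → B (t * g * k) = Ω t * B g)
    -- (N) summing over any set of representatives of 𝔬/𝔭 :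
    (hN : ∀ R : Finset F, (∀ r ∈ R, v r ≤ ev 0) →
      (∀ x : F, v x ≤ ev 0 → ∃! r, r ∈ R ∧ v (x - r) ≤ ev 1) →
      ∀ g, (∑ u ∈ R, B (g * !![1, 0; u, 1])) = - B (g * wmat F))
    -- (A) Atkin–Lehner eigenvector property :
    (hA : ∀ g, B (g * !![0, 1; ϖ, 0]) = -(χ ϖ) * B g) :
    (C = 0 → B !![1, 0; u₀, 1] = -(q : ℂ) * B (wmat F))
    ∧ (0 < C → B !![1, 0; u₀, 1] = 0) := by
  classical
  have hcle : v c ≤ ev 0 := hc.le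
  have hcne : c ≠ 0 := unit_ne_zero v hc
  have h1T : (1 : Matrix (Fin 2) (Fin 2) F) ∈ TSet a b c := by
    refine ⟨1, 0, by norm_num, ?_⟩
    rw [tmat, Matrix.one_fin_two]
    norm_num
  have hOm1 : Ω 1 = 1 := by
    have h := hΩmul 1 1 h1T h1T
    rw [one_mul] at h
    exact (mul_left_cancel₀ (hΩne 1 h1T) (by rw [mul_one]; exact h)).symm
  constructor
  · -- case C = 0
    intro hC0
    subst hC0
    obtain ⟨R, hRcard, hRint, hRrep⟩ := hq
    obtain ⟨r₀, ⟨hr₀R, hr₀v⟩, hr₀uniq⟩ := hRrep u₀ hu₀o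
    -- the u₀-class representative
    have hv1 : v (1 : F) ≤ ev 0 := le_of_eq (by rw [v.map_one, ev0])
    have hkI : !![(1:F), 0; r₀ - u₀, 1] ∈ Iwahori v := by
      refine mem_iwahori v ?_ ?_ ?_ ?_ ?_
      · show v (1 : F) ≤ ev 0; exact hv1
      · show v (0 : F) ≤ ev 0; rw [v.map_zero]; exact zero_le'
      · show v (r₀ - u₀) ≤ ev 1
        rw [show r₀ - u₀ = -(u₀ - r₀) by ring, v.map_neg]; exact hr₀v
      · show v (1 : F) ≤ ev 0; exact hv1
      · rw [Matrix.det_fin_two_of]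
        show v (1 * 1 - 0 * (r₀ - u₀)) = ev 0
        rw [show (1 : F) * 1 - 0 * (r₀ - u₀) = 1 by ring, v.map_one, ev0]
    have hr₀eq : B !![(1:F), 0; r₀, 1] = B !![(1:F), 0; u₀, 1] := by
      have hm : (1 : Matrix (Fin 2) (Fin 2) F) * !![(1:F), 0; u₀, 1] *
          !![(1:F), 0; r₀ - u₀, 1] = !![(1:F), 0; r₀, 1] := by
        ext i j
        fin_cases i <;> fin_cases j <;>
          simp [Matrix.mul_apply, Fin.sum_univ_two] <;> ring
      have h := hE 1 !![(1:F), 0; u₀, 1] !![(1:F), 0; r₀ - u₀, 1] h1T hkI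
      rw [hm, hOm1, one_mul] at h
      exact h
    have herase : ∀ u ∈ R.erase r₀, B !![(1:F), 0; u, 1] = B (wmat F) := by
      intro u huR'
      have huR := Finset.mem_of_mem_erase huR'
      have hune := Finset.ne_of_mem_erase huR'
      have huint := hRint u huR
      have hnotcls : ¬ v (u - u₀) ≤ ev 1 := by
        intro hbad
        refine hune (hr₀uniq u ⟨huR, ?_⟩)
        rw [show u₀ - u = -(u - u₀) by ring, v.map_neg]; exact hbad
      have hAu : v (a + b * u + c * u ^ 2) = ev 0 := hother u huint hnotcls
      have hAne : a + b * u + c * u ^ 2 ≠ 0 := unit_ne_zero v hAu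
      have htT : tmat a b c (-(c * u)) 1 ∈ TSet a b c := by
        refine ⟨-(c * u), 1, ?_, rfl⟩
        rw [show (-(c * u)) ^ 2 - b * (-(c * u)) * 1 + a * c * 1 ^ 2
            = c * (a + b * u + c * u ^ 2) by ring]
        exact mul_ne_zero hcne hAne
      have hdettu : v (tmat a b c (-(c * u)) 1).det = ev 0 := by
        rw [tmat, Matrix.det_fin_two_of,
          show (-(c * u)) * ((-(c * u)) - b * 1) - c * 1 * (-(a * 1))
            = c * (a + b * u + c * u ^ 2) by ring,
          v.map_mul, hc, hAu, ev0, one_mul]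
      have htU : Umem v a b c 0 (tmat a b c (-(c * u)) 1) := by
        refine ⟨htT, ?_⟩
        rw [if_pos rfl]
        refine ⟨entries_of v ?_ ?_ ?_ ?_, hdettu⟩
        · rw [tmat00, v.map_neg]; exact vmul v hcle huint
        · rw [tmat01, mul_one]; exact hcle
        · rw [tmat10, v.map_neg, mul_one]; exact hao
        · rw [tmat11, mul_one]
          exact vsub v (by rw [v.map_neg]; exact vmul v hcle huint) hbo
      have hOmtu : Ω (tmat a b c (-(c * u)) 1) = 1 := hcond _ htU
      have hkinvI : !![(a + b * u + c * u ^ 2)⁻¹,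
          -((b + c * u) / (c * (a + b * u + c * u ^ 2))); 0, c⁻¹] ∈ Iwahori v := by
        have hden : v (c * (a + b * u + c * u ^ 2)) = ev 0 := by
          rw [v.map_mul, hc, hAu, ev0, one_mul]
        refine mem_iwahori v ?_ ?_ ?_ ?_ ?_
        · show v ((a + b * u + c * u ^ 2)⁻¹) ≤ ev 0
          rw [map_inv₀, hAu, ev0, inv_one]
        · show v (-((b + c * u) / (c * (a + b * u + c * u ^ 2)))) ≤ ev 0
          rw [v.map_neg, map_div₀, hden, ev0, div_one, ← ev0]
          exact vadd v hbo (vmul v hcle huint)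
        · show v (0 : F) ≤ ev 1
          rw [v.map_zero]; exact zero_le'
        · show v (c⁻¹) ≤ ev 0
          rw [map_inv₀, hc, ev0, inv_one]
        · rw [Matrix.det_fin_two_of]
          show v ((a + b * u + c * u ^ 2)⁻¹ * c⁻¹ -
              -((b + c * u) / (c * (a + b * u + c * u ^ 2))) * 0) = ev 0
          rw [show (a + b * u + c * u ^ 2)⁻¹ * c⁻¹ -
              -((b + c * u) / (c * (a + b * u + c * u ^ 2))) * 0
              = (c * (a + b * u + c * u ^ 2))⁻¹ by field_simp; ring]
          rw [map_inv₀, hden, ev0, inv_one]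
      have hid : tmat a b c (-(c * u)) 1 * !![(1:F), 0; u, 1] *
          !![(a + b * u + c * u ^ 2)⁻¹,
            -((b + c * u) / (c * (a + b * u + c * u ^ 2))); 0, c⁻¹] = wmat F := by
        have hAne' : a + u * b + c * u ^ 2 ≠ 0 := by rwa [mul_comm u b]
        ext i j
        fin_cases i <;> fin_cases j <;>
          simp [tmat, wmat, Matrix.mul_apply, Fin.sum_univ_two] <;> field_simp <;> ring
      have h := hE (tmat a b c (-(c * u)) 1) !![(1:F), 0; u, 1] _ htT hkinvI
      rw [hid, hOmtu, one_mul] at h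
      exact h.symm
    have hNsum := hN R hRint hRrep 1
    simp only [one_mul] at hNsum
    rw [← Finset.add_sum_erase R (fun u => B !![(1:F), 0; u, 1]) hr₀R] at hNsum
    have hq1 : 1 ≤ q := hRcard ▸ Finset.card_pos.mpr ⟨r₀, hr₀R⟩
    rw [Finset.sum_congr rfl herase, Finset.sum_const,
      Finset.card_erase_of_mem hr₀R, hRcard, nsmul_eq_mul,
      Nat.cast_sub hq1, Nat.cast_one, hr₀eq] at hNsum
    linear_combination hNsum
  · -- case C > 0
    intro hCpos
    obtain ⟨t, htU, hOmt⟩ := hleast 0 hCpos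
    obtain ⟨htT, htO⟩ := htU
    rw [if_pos rfl] at htO
    obtain ⟨htint, htdet⟩ := htO
    obtain ⟨x, y, hD, rfl⟩ := htT
    have htT' : tmat a b c x y ∈ TSet a b c := ⟨x, y, hD, rfl⟩
    have hx : v x ≤ ev 0 := by have h := htint 0 0; rwa [tmat00] at h
    have hy : v y ≤ ev 0 := by
      have h := htint 0 1
      rw [tmat01, v.map_mul, hc, ev0, one_mul] at h
      exact h
    have hvD : v (x ^ 2 - b * x * y + a * c * y ^ 2) = ev 0 := by
      have h := htdet
      rw [tmat, Matrix.det_fin_two_of] at h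
      rwa [show x * (x - b * y) - c * y * (-(a * y))
        = x ^ 2 - b * x * y + a * c * y ^ 2 by ring] at h
    have hdiv : ∀ z : F, v (z / (x ^ 2 - b * x * y + a * c * y ^ 2)) = v z := by
      intro z; rw [map_div₀, hvD, ev0, div_one]
    have hkI : !![(x - b * y - c * u₀ * y) / (x ^ 2 - b * x * y + a * c * y ^ 2),
        -(c * y) / (x ^ 2 - b * x * y + a * c * y ^ 2);
        (y * (c * u₀ ^ 2 + b * u₀ + a)) / (x ^ 2 - b * x * y + a * c * y ^ 2),
        (x + c * u₀ * y) / (x ^ 2 - b * x * y + a * c * y ^ 2)] ∈ Iwahori v := by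
      refine mem_iwahori v ?_ ?_ ?_ ?_ ?_
      · simpa using (by
          rw [hdiv]
          exact vsub v (vsub v hx (vmul v hbo hy)) (vmul v (vmul v hcle hu₀o) hy) :
          v ((x - b * y - c * u₀ * y) / (x ^ 2 - b * x * y + a * c * y ^ 2)) ≤ ev 0)
      · simpa using (by
          rw [hdiv, v.map_neg]; exact vmul v hcle hy :
          v (-(c * y) / (x ^ 2 - b * x * y + a * c * y ^ 2)) ≤ ev 0)
      · simpa using (by
          rw [hdiv]; exact vmulp v hy hu₀ :
          v ((y * (c * u₀ ^ 2 + b * u₀ + a)) / (x ^ 2 - b * x * y + a * c * y ^ 2)) ≤ ev 1)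
      · simpa using (by
          rw [hdiv]; exact vadd v hx (vmul v (vmul v hcle hu₀o) hy) :
          v ((x + c * u₀ * y) / (x ^ 2 - b * x * y + a * c * y ^ 2)) ≤ ev 0)
      · rw [show Matrix.det !![(x - b * y - c * u₀ * y) / (x ^ 2 - b * x * y + a * c * y ^ 2),
            -(c * y) / (x ^ 2 - b * x * y + a * c * y ^ 2);
            (y * (c * u₀ ^ 2 + b * u₀ + a)) / (x ^ 2 - b * x * y + a * c * y ^ 2),
            (x + c * u₀ * y) / (x ^ 2 - b * x * y + a * c * y ^ 2)]
            = (x ^ 2 - b * x * y + a * c * y ^ 2)⁻¹ by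
          rw [Matrix.det_fin_two_of]
          field_simp (disch := (convert hD using 1; ring))
          ring]
        rw [map_inv₀, hvD, ev0, inv_one]
    have hid : tmat a b c x y * !![(1:F), 0; u₀, 1] *
        !![(x - b * y - c * u₀ * y) / (x ^ 2 - b * x * y + a * c * y ^ 2),
        -(c * y) / (x ^ 2 - b * x * y + a * c * y ^ 2);
        (y * (c * u₀ ^ 2 + b * u₀ + a)) / (x ^ 2 - b * x * y + a * c * y ^ 2),
        (x + c * u₀ * y) / (x ^ 2 - b * x * y + a * c * y ^ 2)] = !![(1:F), 0; u₀, 1] := by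
      ext i j
      fin_cases i <;> fin_cases j <;>
        simp [tmat, Matrix.mul_apply, Fin.sum_univ_two] <;>
          field_simp (disch := (convert hD using 1; ring)) <;> ring
    have h := hE (tmat a b c x y) !![(1:F), 0; u₀, 1] _ htT' hkI
    rw [hid] at h
    have hz : (Ω (tmat a b c x y) - 1) * B !![(1:F), 0; u₀, 1] = 0 := by
      linear_combination -h
    rcases mul_eq_zero.mp hz with h' | h'
    · exact absurd (sub_eq_zero.mp h') hOmt
    · exact h'
end
end

section
/- Assume d is not a square in F. Let χ : F^× → ℂ^× be a group homomorphism trivial on o^×, and let Ω : T(F) → ℂ^× be the homomorphism Ω(t) = χ(det t) for all t ∈ T(F) (so Ω is trivial on U_0 = T(F) ∩ GL₂(o), i.e., c(Ω) = 0). Let B : GL₂(F) → ℂ satisfy: (E) B(t·g·k) = Ω(t)·B(g) for all t ∈ T(F), g ∈ GL₂(F), k ∈ I; (N) for every set R ⊆ o of representatives of o/p and every g ∈ GL₂(F), ∑_{u ∈ R} B(g·[[1, 0], [u, 1]]) = −B(g·w); (A) B(g·[[0, 1], [ϖ, 0]]) = −χ(ϖ)·B(g) for all g ∈ GL₂(F).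 Then B(w) = 0. -/
open Matrix

noncomputable section

variable {F : Type*} [Field F]

/-! ### auxiliary lemmas on `ev` -/

section EvLemmas

lemma ev_mul' (m n : ℤ) : ev m * ev n = ev (m + n) := by
  have h : -(m+n) = (-m) + (-n) := by ring
  rw [ev, ev, ev, h, ofAdd_add, WithZero.coe_mul]

lemma ev_inv' (m : ℤ) : (ev m)⁻¹ = ev (-m) := by
  rw [ev, ev, ← WithZero.coe_inv, ← ofAdd_neg, neg_neg]

lemma ev_le_iff (m n : ℤ) : ev m ≤ ev n ↔ n ≤ m := by
  rw [ev, ev, WithZero.coe_le_coe, Multiplicative.ofAdd_le, neg_le_neg_iff]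

lemma ev_lt_iff (m n : ℤ) : ev m < ev n ↔ n < m := by
  rw [ev, ev, WithZero.coe_lt_coe, Multiplicative.ofAdd_lt, neg_lt_neg_iff]

lemma ev_inj {m n : ℤ} : ev m = ev n ↔ m = n := by
  constructor
  · intro h
    have h1 := (ev_le_iff m n).mp h.le
    have h2 := (ev_le_iff n m).mp h.ge
    omega
  · rintro rfl; rfl

lemma ev_ne_zero (m : ℤ) : ev m ≠ 0 := WithZero.coe_ne_zero

lemma zero_le_ev (n : ℤ) : (0 : Zm0) ≤ ev n := zero_le'

lemma exists_ev {x : Zm0} (hx : x ≠ 0) : ∃ m : ℤ, x = ev m := by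
  rcases WithZero.ne_zero_iff_exists.mp hx with ⟨g, hg⟩
  exact ⟨-Multiplicative.toAdd g, by rw [← hg, ev, neg_neg, ofAdd_toAdd]⟩

lemma ev_gap {x : Zm0} {m n : ℤ} (hmn : n = m + 1) (h0 : x ≤ ev m) (h1 : ¬ x ≤ ev n) :
    x = ev m := by
  have hx : x ≠ 0 := by rintro rfl; exact h1 (zero_le_ev _)
  rcases exists_ev hx with ⟨k, rfl⟩
  rw [ev_le_iff] at h0 h1
  rw [ev_inj]
  omega

end EvLemmas

/-! ### auxiliary valuation lemmas -/

section VLemmas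

variable (v : Valuation F Zm0)

lemma v_one' : v 1 = ev 0 := by
  have : ev (0:ℤ) = (1 : Zm0) := rfl
  rw [this]; exact v.map_one

lemma v_ne_zero' {x : F} {m : ℤ} (h : v x = ev m) : x ≠ 0 := by
  intro h0; rw [h0, v.map_zero] at h; exact ev_ne_zero m h.symm

lemma v_mul_val {x y : F} {mx my : ℤ} (hx : v x = ev mx) (hy : v y = ev my) :
    v (x * y) = ev (mx + my) := by rw [v.map_mul, hx, hy, ev_mul']

lemma v_mul_le {x y : F} {mx my : ℤ} (hx : v x ≤ ev mx) (hy : v y ≤ ev my) :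
    v (x * y) ≤ ev (mx + my) := by
  rw [v.map_mul, ← ev_mul']; exact mul_le_mul' hx hy

lemma v_inv_val {x : F} {m : ℤ} (hx : v x = ev m) : v x⁻¹ = ev (-m) := by
  rw [v.map_inv, hx, ev_inv']

lemma v_div_val {x y : F} {mx my : ℤ} (hx : v x = ev mx) (hy : v y = ev my) :
    v (x / y) = ev (mx - my) := by
  rw [div_eq_mul_inv, v_mul_val v hx (v_inv_val v hy)]; ring_nf

lemma v_div_le {x y : F} {mx my : ℤ} (hx : v x ≤ ev mx) (hy : v y = ev my) :
    v (x / y) ≤ ev (mx - my) := by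
  rw [div_eq_mul_inv, show mx - my = mx + (-my) by ring]
  exact v_mul_le v hx (v_inv_val v hy).le

lemma v_add_dom {x y : F} {m : ℤ} (hx : v x = ev m) (hy : v y ≤ ev (m+1)) :
    v (x + y) = ev m := by
  rw [add_comm, Valuation.map_add_eq_of_lt_right]
  · exact hx
  · exact lt_of_le_of_lt hy (by rw [hx, ev_lt_iff]; omega)

lemma v_add_le {x y : F} {m : ℤ} (hx : v x ≤ ev m) (hy : v y ≤ ev m) : v (x + y) ≤ ev m :=
  v.map_add_le hx hy

lemma v_sub_le {x y : F} {m : ℤ} (hx : v x ≤ ev m) (hy : v y ≤ ev m) : v (x - y) ≤ ev m :=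
  v.map_sub_le hx hy

lemma v00 {x y : F} (hx : v x ≤ ev 0) (hy : v y ≤ ev 0) : v (x * y) ≤ ev 0 := by
  have h := v_mul_le v hx hy; rwa [show ((0:ℤ)+0) = 0 by norm_num] at h

lemma v01 {x y : F} (hx : v x ≤ ev 0) (hy : v y ≤ ev 1) : v (x * y) ≤ ev 1 := by
  have h := v_mul_le v hx hy; rwa [show ((0:ℤ)+1) = 1 by norm_num] at h

lemma v10 {x y : F} (hx : v x ≤ ev 1) (hy : v y ≤ ev 0) : v (x * y) ≤ ev 1 := by
  have h := v_mul_le v hx hy; rwa [show ((1:ℤ)+0) = 1 by norm_num] at h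

lemma vUU {x y : F} (hx : v x = ev 0) (hy : v y = ev 0) : v (x * y) = ev 0 := by
  have h := v_mul_val v hx hy; rwa [show ((0:ℤ)+0) = 0 by norm_num] at h

lemma v_sq_le {x : F} {m : ℤ} (hx : v x ≤ ev m) : v (x^2) ≤ ev (m + m) := by
  rw [pow_two]; exact v_mul_le v hx hx

lemma v_sq_val {x : F} {m : ℤ} (hx : v x = ev m) : v (x^2) = ev (m + m) := by
  rw [pow_two]; exact v_mul_val v hx hx

lemma v_sq00 {x : F} (hx : v x ≤ ev 0) : v (x^2) ≤ ev 0 := by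
  have h := v_sq_le v hx; rwa [show ((0:ℤ)+0) = 0 by norm_num] at h

lemma v_two_le : v 2 ≤ ev 0 := by
  have h : (2 : F) = 1 + 1 := by norm_num
  rw [h]; exact v_add_le v (v_one' v).le (v_one' v).le

lemma v_four_le : v 4 ≤ ev 0 := by
  have h : (4 : F) = 2 * 2 := by norm_num
  rw [h]; exact v00 v (v_two_le v) (v_two_le v)

lemma v_le_weaken {x : F} {m n : ℤ} (h : v x ≤ ev m) (hmn : n ≤ m) : v x ≤ ev n :=
  le_trans h ((ev_le_iff m n).mpr hmn)

lemma v_zero_le {m : ℤ} : v 0 ≤ ev m := by rw [v.map_zero]; exact zero_le_ev m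

end VLemmas

/-! ### matrix helper lemmas -/

section MatLemmas

lemma mat2_eq {A B C D A' B' C' D' : F} (h1 : A = A') (h2 : B = B') (h3 : C = C')
    (h4 : D = D') : !![A, B; C, D] = !![A', B'; C', D'] := by
  subst h1 h2 h3 h4; rfl

lemma smul_mat2 {s A B C D : F} :
    s • (!![A, B; C, D] : Matrix (Fin 2) (Fin 2) F) = !![s*A, s*B; s*C, s*D] := by
  ext i j; fin_cases i <;> fin_cases j <;> simp [Matrix.smul_apply]

lemma tmat_smul (a b c x y s : F) : tmat a b c (s*x) (s*y) = s • tmat a b c x y := by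
  rw [tmat, tmat, smul_mat2]; apply mat2_eq <;> ring

lemma scalmat_mul (N : F) (X : Matrix (Fin 2) (Fin 2) F) : !![N,0;0,N] * X = N • X := by
  have h : (!![N,0;0,N] : Matrix (Fin 2) (Fin 2) F) = N • (1 : Matrix (Fin 2) (Fin 2) F) := by
    rw [Matrix.one_fin_two, smul_mat2]; apply mat2_eq <;> ring
  rw [h, smul_mul_assoc, one_mul]

lemma det_tmat (a b c x y : F) : (tmat a b c x y).det = x^2 - b*x*y + a*c*y^2 := by
  rw [tmat, Matrix.det_fin_two_of]; ring

lemma tmat_one (a b c : F) : tmat a b c 1 0 = 1 := by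
  rw [tmat, Matrix.one_fin_two]
  apply mat2_eq <;> ring

lemma mul_div_self' {c r : F} (hc : c ≠ 0) : c * (r/c) = r := by
  rw [mul_comm, div_mul_cancel₀ r hc]

lemma mem_tset (a b c x y : F) (h : x ^ 2 - b * x * y + a * c * y ^ 2 ≠ 0) :
    tmat a b c x y ∈ TSet a b c := ⟨x, y, h, rfl⟩

lemma mem_iwahori_s13 (v : Valuation F Zm0) {p q s t : F} (hp : v p ≤ ev 0) (hq : v q ≤ ev 0)
    (hs : v s ≤ ev 1) (ht : v t ≤ ev 0) (hdet : v (p*t - q*s) = ev 0) :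
    !![p, q; s, t] ∈ Iwahori v := by
  refine ⟨⟨fun i j => ?_, ?_⟩, by simpa using hs⟩
  · fin_cases i <;> fin_cases j <;> simp [hp, hq, ht]
    exact v_le_weaken v hs (by norm_num)
  · rw [Matrix.det_fin_two_of]; exact hdet

end MatLemmas

/-! ### the matrix identities -/

section Identities

set_option maxHeartbeats 1000000

lemma idI1 {a b c u N : F} (hNdef : N = (c*u+b)^2 - b*(c*u+b) + a*c) :
    tmat a b c (c*u) (-1) * !![1,0;u,1] * !![-c, c*u+b; 0, -(a+b*u+c*u^2)]
      = !![N,0;0,N] * wmat F := by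
  subst hNdef
  rw [tmat, wmat, Matrix.mul_fin_two, Matrix.mul_fin_two, Matrix.mul_fin_two]
  apply mat2_eq <;> ring

lemma idI2 {a b c r e ϖ : F} (hc : c ≠ 0) (hϖ : ϖ ≠ 0)
    (hedef : e = r^2 + b*r + a*c) :
    tmat a b c (-b-r) (-1) * (!![1,0;(-b-r)/c,1] * !![0,1;ϖ,0]) * !![-(e/(c*ϖ)), 0; 0, c]
      = !![e,0;0,e] * !![1,0;r/c,1] := by
  subst hedef
  rw [tmat, Matrix.mul_fin_two, Matrix.mul_fin_two, Matrix.mul_fin_two, Matrix.mul_fin_two]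
  apply mat2_eq <;> field_simp <;> ring

lemma idI3 {a b c r e ϖ u x₀ N : F} (hc : c ≠ 0) (hϖ : ϖ ≠ 0)
    (hedef : e = r^2 + b*r + a*c) (hx₀ : x₀ = -(u*e/(c*ϖ)) - r)
    (hNdef : N = x₀^2 - b*x₀ + a*c) :
    tmat a b c (x₀-b) (-1) * ((!![1,0;r/c,1] * !![0,1;ϖ,0]) * !![1,0;u,1]) *
      !![e/(c*ϖ), x₀+(-b-r); 0, c*ϖ - u*(x₀+(-b-r))]
      = !![N,0;0,N] * ((!![1,0;r/c,1] * !![0,1;ϖ,0]) * wmat F) := by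
  subst hedef hx₀ hNdef
  rw [tmat, wmat, Matrix.mul_fin_two, Matrix.mul_fin_two, Matrix.mul_fin_two,
    Matrix.mul_fin_two, Matrix.mul_fin_two, Matrix.mul_fin_two]
  apply mat2_eq <;> field_simp <;> ring

lemma idI4a {a b c r e δ ϖ : F} (hc : c ≠ 0) (hϖ : ϖ ≠ 0) (he : e ≠ 0)
    (hedef : e = r^2 + b*r + a*c) (hδ : δ = 2*r + b) :
    tmat a b c (-r) 1 * wmat F * !![(e - δ*r)/(c*e), r*ϖ/e; δ/e, -(c*ϖ/e)]
      = (!![1,0;r/c,1] * !![0,1;ϖ,0]) * wmat F := by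
  subst hδ
  rw [tmat, wmat, Matrix.mul_fin_two, Matrix.mul_fin_two, Matrix.mul_fin_two,
    Matrix.mul_fin_two]
  apply mat2_eq <;> field_simp <;> subst hedef <;> ring

lemma idI4b {a b c r e δ ϖ : F} (hc : c ≠ 0) (hϖ : ϖ ≠ 0) (he : e ≠ 0) (hδ0 : δ ≠ 0)
    (hedef : e = r^2 + b*r + a*c) (hδ : δ = 2*r + b) :
    tmat a b c (-r) 1 * wmat F * !![ϖ/δ, (δ*r - e)/(c*e); 0, -(δ/e)]
      = (!![1,0;r/c,1] * !![0,1;ϖ,0]) * !![1,0; -(c*ϖ)/δ ,1] := by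
  rw [tmat, wmat, Matrix.mul_fin_two, Matrix.mul_fin_two, Matrix.mul_fin_two,
    Matrix.mul_fin_two]
  apply mat2_eq <;> field_simp <;> subst hedef hδ <;> ring

lemma idI5 {a b c r e δ ϖ x₃ y₃ : F} (hc : c ≠ 0) (hϖ : ϖ ≠ 0)
    (hedef : e = r^2 + b*r + a*c) (hδ : δ = 2*r + b) :
    !![1, 0; r/c, ϖ] * tmat (e/(c*ϖ^2)) (δ/ϖ) c x₃ y₃
      = tmat a b c (x₃ - r*y₃/ϖ) (y₃/ϖ) * !![1, 0; r/c, ϖ] := by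
  subst hedef hδ
  rw [tmat, tmat, Matrix.mul_fin_two, Matrix.mul_fin_two]
  apply mat2_eq <;> field_simp <;> ring

lemma normI5 {a b c r e δ ϖ x₃ y₃ : F} (hc : c ≠ 0) (hϖ : ϖ ≠ 0)
    (hedef : e = r^2 + b*r + a*c) (hδ : δ = 2*r + b) :
    (x₃ - r*y₃/ϖ)^2 - b*(x₃ - r*y₃/ϖ)*(y₃/ϖ) + a*c*(y₃/ϖ)^2
      = x₃^2 - (δ/ϖ)*x₃*y₃ + (e/(c*ϖ^2))*c*y₃^2 := by
  subst hedef hδ; field_simp; ring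

lemma idI6 {c r ϖ : F} :
    !![1, 0; r/c, ϖ] * wmat F = (!![1,0;r/c,1] * !![0,1;ϖ,0]) * !![(-1 : F),0;0,1] := by
  rw [wmat, Matrix.mul_fin_two, Matrix.mul_fin_two, Matrix.mul_fin_two]
  apply mat2_eq <;> ring

end Identities

/-! ### the two "engine" lemmas -/

section Engine

variable (v : Valuation F Zm0) {a b c : F} (χ : F → ℂ) (B : Matrix (Fin 2) (Fin 2) F → ℂ)

/-- unscaled coset relation -/
lemma relU (hE' : ∀ t g k, t ∈ TSet a b c → k ∈ Iwahori v → B (t*g*k) = χ t.det * B g)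
    {x y : F} (h0 : x^2 - b*x*y + a*c*y^2 ≠ 0) {g k g' : Matrix (Fin 2) (Fin 2) F}
    (hk : k ∈ Iwahori v) (hmul : tmat a b c x y * g * k = g') :
    B g' = χ (x^2 - b*x*y + a*c*y^2) * B g := by
  have h := hE' _ g k (mem_tset a b c x y h0) hk
  rw [hmul] at h
  rw [h, det_tmat]

/-- scaled coset relation -/
lemma relS (hE' : ∀ t g k, t ∈ TSet a b c → k ∈ Iwahori v → B (t*g*k) = χ t.det * B g)
    {x y N : F} (hN : N ≠ 0) {g k g' : Matrix (Fin 2) (Fin 2) F} (hk : k ∈ Iwahori v)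
    (hmul : tmat a b c x y * g * k = !![N,0;0,N] * g')
    (hnormN : x^2 - b*x*y + a*c*y^2 = N) :
    B g' = χ (1/N) * B g := by
  have hxy : tmat a b c (N⁻¹ * x) (N⁻¹ * y) = N⁻¹ • tmat a b c x y := tmat_smul a b c x y N⁻¹
  have hmul' : tmat a b c (N⁻¹ * x) (N⁻¹ * y) * g * k = g' := by
    rw [hxy, smul_mul_assoc, smul_mul_assoc, hmul, scalmat_mul, smul_smul,
      inv_mul_cancel₀ hN, one_smul]
  have hnorm' : (N⁻¹*x)^2 - b*(N⁻¹*x)*(N⁻¹*y) + a*c*(N⁻¹*y)^2 = 1/N := by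
    have h1 : (N⁻¹*x)^2 - b*(N⁻¹*x)*(N⁻¹*y) + a*c*(N⁻¹*y)^2
        = (x^2 - b*x*y + a*c*y^2) * (N⁻¹)^2 := by ring
    rw [h1, hnormN, pow_two, ← mul_assoc, mul_inv_cancel₀ hN, one_mul, one_div]
  have h0 : (N⁻¹*x)^2 - b*(N⁻¹*x)*(N⁻¹*y) + a*c*(N⁻¹*y)^2 ≠ 0 := by
    rw [hnorm']; exact one_div_ne_zero hN
  have h := hE' _ g k (mem_tset a b c _ _ h0) hk
  rw [hmul'] at h
  rw [h, det_tmat, hnorm']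

end Engine

/-! ### representatives -/

section Reps

variable (v : Valuation F Zm0)

lemma reps_distinct {R : Finset F} (hb : ∀ r ∈ R, v r ≤ ev 0)
    (hrep : ∀ x : F, v x ≤ ev 0 → ∃! r, r ∈ R ∧ v (x - r) ≤ ev 1)
    {u u' : F} (hu : u ∈ R) (hu' : u' ∈ R) (hne : u ≠ u') :
    v (u - u') = ev 0 := by
  apply ev_gap rfl (v_sub_le v (hb u hu) (hb u' hu'))
  intro hle
  obtain ⟨ρ, _, huniq⟩ := hrep u (hb u hu)
  have h1 : u = ρ := huniq u ⟨hu, by rw [sub_self]; exact v_zero_le v⟩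
  have h2 : u' = ρ := huniq u' ⟨hu', by norm_num at hle ⊢; exact hle⟩
  exact hne (h1.trans h2.symm)

lemma reps_card_ge_two {R : Finset F} (hb : ∀ r ∈ R, v r ≤ ev 0)
    (hrep : ∀ x : F, v x ≤ ev 0 → ∃! r, r ∈ R ∧ v (x - r) ≤ ev 1) :
    2 ≤ R.card := by
  obtain ⟨ρ0, ⟨hρ0R, hρ0v⟩, _⟩ := hrep 0 (v_zero_le v)
  obtain ⟨ρ1, ⟨hρ1R, hρ1v⟩, _⟩ := hrep 1 (v_one' v).le
  have hne : ρ1 ≠ ρ0 := by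
    intro h
    subst h
    have h1 : v ((1 - ρ1) - (0 - ρ1)) ≤ ev 1 := v_sub_le v hρ1v hρ0v
    have h2 : (1 - ρ1) - (0 - ρ1) = (1 : F) := by ring
    rw [h2, v_one' v] at h1
    rw [ev_le_iff] at h1
    omega
  have := Finset.one_lt_card.mpr ⟨ρ1, hρ1R, ρ0, hρ0R, hne⟩
  omega

lemma reps_adapt {R : Finset F} (hb : ∀ r ∈ R, v r ≤ ev 0)
    (hrep : ∀ x : F, v x ≤ ev 0 → ∃! r, r ∈ R ∧ v (x - r) ≤ ev 1)
    {u₀ : F} (hu₀ : v u₀ ≤ ev 0) :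
    ∃ R' : Finset F, R'.card = R.card ∧ u₀ ∈ R' ∧ (∀ r ∈ R', v r ≤ ev 0) ∧
      (∀ x : F, v x ≤ ev 0 → ∃! r, r ∈ R' ∧ v (x - r) ≤ ev 1) ∧
      (∀ u ∈ R, ¬ v (u - u₀) ≤ ev 1 → u ∈ R') := by
  classical
  obtain ⟨ρ, ⟨hρR, hρv⟩, hρuniq⟩ := hrep u₀ hu₀
  refine ⟨insert u₀ (R.erase ρ), ?_, Finset.mem_insert_self _ _, ?_, ?_, ?_⟩
  · have hnm : u₀ ∉ R.erase ρ := by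
      intro hmem
      rcases Finset.mem_erase.mp hmem with ⟨hne, hmemR⟩
      exact hne (hρuniq u₀ ⟨hmemR, by rw [sub_self]; exact v_zero_le v⟩)
    rw [Finset.card_insert_of_notMem hnm, Finset.card_erase_of_mem hρR]
    have := Finset.card_pos.mpr ⟨ρ, hρR⟩
    omega
  · intro r hr
    rcases Finset.mem_insert.mp hr with h | h
    · rw [h]; exact hu₀
    · exact hb r (Finset.mem_erase.mp h).2
  · intro x hx
    obtain ⟨σ, ⟨hσR, hσv⟩, hσuniq⟩ := hrep x hx
    by_cases hσρ : σ = ρ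
    · refine ⟨u₀, ⟨Finset.mem_insert_self _ _, ?_⟩, ?_⟩
      · have h1 : x - u₀ = (x - σ) + (σ - u₀) := by ring
        rw [h1]
        apply v_add_le v hσv
        rw [← hσρ] at hρv
        rw [v.map_sub_swap]
        exact hρv
      · rintro y ⟨hy, hyv⟩
        rcases Finset.mem_insert.mp hy with h | h
        · exact h
        · rcases Finset.mem_erase.mp h with ⟨hyρ, hyR⟩
          exact absurd (hσρ ▸ hσuniq y ⟨hyR, hyv⟩) hyρ
    · refine ⟨σ, ⟨Finset.mem_insert_of_mem (Finset.mem_erase.mpr ⟨hσρ, hσR⟩), hσv⟩, ?_⟩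
      rintro y ⟨hy, hyv⟩
      rcases Finset.mem_insert.mp hy with h | h
      · exfalso
        apply hσρ
        have h1 : v (u₀ - σ) ≤ ev 1 := by
          have h2 : u₀ - σ = (x - σ) - (x - u₀) := by ring
          rw [h2]
          exact v_sub_le v hσv (h ▸ hyv)
        exact hρuniq σ ⟨hσR, h1⟩
      · exact hσuniq y ⟨(Finset.mem_erase.mp h).2, hyv⟩
  · intro u huR hufar
    apply Finset.mem_insert_of_mem
    apply Finset.mem_erase.mpr
    refine ⟨?_, huR⟩
    intro h
    apply hufar
    rw [h, v.map_sub_swap]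
    exact hρv

end Reps

/-! ### main auxiliary induction -/

theorem aux (v : Valuation F Zm0) (ϖ : F) (hϖ : v ϖ = ev 1)
    (q : ℕ) (R : Finset F) (hRcard : R.card = q) (hRb : ∀ r ∈ R, v r ≤ ev 0)
    (hRrep : ∀ x : F, v x ≤ ev 0 → ∃! r, r ∈ R ∧ v (x - r) ≤ ev 1)
    (χ : F → ℂ)
    (hχmul : ∀ x y : F, x ≠ 0 → y ≠ 0 → χ (x * y) = χ x * χ y)
    (hχne : ∀ x : F, x ≠ 0 → χ x ≠ 0)
    (hχtriv : ∀ u : F, v u = ev 0 → χ u = 1) :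
    ∀ n : ℕ, ∀ a b c : F, v a ≤ ev 0 → v b ≤ ev 0 → v c = ev 0 →
    (∀ s : F, s ^ 2 ≠ b ^ 2 - 4 * (a * c)) → v (b ^ 2 - 4 * (a * c)) = ev n →
    ∀ B : Matrix (Fin 2) (Fin 2) F → ℂ,
    (∀ t g k, t ∈ TSet a b c → k ∈ Iwahori v → B (t * g * k) = χ t.det * B g) →
    (∀ R' : Finset F, (∀ r ∈ R', v r ≤ ev 0) →
      (∀ x : F, v x ≤ ev 0 → ∃! r, r ∈ R' ∧ v (x - r) ≤ ev 1) →
      ∀ g, (∑ u ∈ R', B (g * !![1, 0; u, 1])) = - B (g * wmat F)) →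
    (∀ g, B (g * !![0, 1; ϖ, 0]) = -(χ ϖ) * B g) →
    B (wmat F) = 0 := by
  classical
  have hq2 : 2 ≤ q := hRcard ▸ reps_card_ge_two v hRb hRrep
  have hπ0 : ϖ ≠ 0 := v_ne_zero' v hϖ
  have hqC : (q : ℂ) ≠ 0 := Nat.cast_ne_zero.mpr (by omega)
  have hχϖ : χ ϖ ≠ 0 := hχne ϖ hπ0
  have hcast1 : ((q - 1 : ℕ) : ℂ) = (q : ℂ) - 1 := by
    rw [Nat.cast_sub (by omega : 1 ≤ q)]; norm_num
  have hcast2 : ((q - 2 : ℕ) : ℂ) = (q : ℂ) - 2 := by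
    rw [Nat.cast_sub hq2]; norm_num
  have hχN : ∀ {N : F}, v N = ev 0 → χ (1/N) = 1 := by
    intro N hNv
    apply hχtriv
    rw [one_div]
    have h := v_inv_val v hNv
    rwa [show (-(0:ℤ)) = 0 by norm_num] at h
  intro n
  induction n using Nat.strong_induction_on with
  | _ n IH =>
  intro a b c hao hbo hc hnonsq hvd B hE' hN hA
  have hc0 : c ≠ 0 := v_ne_zero' v hc
  -- the master relation: if Q(cu) is a unit then the edge n(u) is equivalent to the edge w
  have L1 : ∀ u : F, v u ≤ ev 0 → v ((c*u)^2 + b*(c*u) + a*c) = ev 0 →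
      B (wmat F) = B !![1,0;u,1] := by
    intro u hu hQ
    have hNv : v ((c*u+b)^2 - b*(c*u+b) + a*c) = ev 0 := by
      rw [show (c*u+b)^2 - b*(c*u+b) + a*c = (c*u)^2 + b*(c*u) + a*c by ring]
      exact hQ
    have hN0 : (c*u+b)^2 - b*(c*u+b) + a*c ≠ 0 := v_ne_zero' v hNv
    have hk : !![-c, c*u+b; 0, -(a+b*u+c*u^2)] ∈ Iwahori v := by
      apply mem_iwahori_s13 v
      · rw [v.map_neg]; exact hc.le
      · exact v_add_le v (v00 v hc.le hu) hbo
      · exact v_zero_le v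
      · rw [v.map_neg]
        exact v_add_le v (v_add_le v hao (v00 v hbo hu)) (v00 v hc.le (v_sq00 v hu))
      · rw [show (-c) * (-(a+b*u+c*u^2)) - (c*u+b) * 0
            = (c*u+b)^2 - b*(c*u+b) + a*c by ring]
        exact hNv
    have hrel := relS v χ B hE' hN0 hk (idI1 rfl) (by ring)
    rw [hrel, hχN hNv, one_mul]
  by_cases hroot : ∃ r : F, v r ≤ ev 0 ∧ v (r^2 + b*r + a*c) ≤ ev 1
  · obtain ⟨r0, hr0o, hr0Q⟩ := hroot
    by_cases hδS : v (2*r0 + b) = ev 0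
    · -- CASE S : residually split
      obtain ⟨r, hro, heval, hδu⟩ :
          ∃ r : F, v r ≤ ev 0 ∧ v (r^2 + b*r + a*c) = ev 1 ∧ v (2*r + b) = ev 0 := by
        by_cases hx : v (r0^2 + b*r0 + a*c) = ev 1
        · exact ⟨r0, hr0o, hx, hδS⟩
        · have h2 : v (r0^2 + b*r0 + a*c) ≤ ev 2 := by
            by_contra hcon
            exact hx (ev_gap (by norm_num) hr0Q hcon)
          refine ⟨r0 + ϖ, v_add_le v hr0o (v_le_weaken v hϖ.le (by norm_num)), ?_, ?_⟩
          · rw [show (r0+ϖ)^2 + b*(r0+ϖ) + a*c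
                = ϖ*(2*r0+b) + ((r0^2 + b*r0 + a*c) + ϖ^2) by ring]
            have hm : v (ϖ*(2*r0+b)) = ev 1 := by
              have h := v_mul_val v hϖ hδS
              rwa [show (1:ℤ)+0 = 1 by norm_num] at h
            apply v_add_dom v hm
            rw [show (1:ℤ)+1 = 2 by norm_num]
            apply v_add_le v h2
            have h := v_sq_val v hϖ
            rw [show (1:ℤ)+1 = 2 by norm_num] at h
            exact h.le
          · rw [show 2*(r0+ϖ) + b = (2*r0+b) + 2*ϖ by ring]
            apply v_add_dom v hδS
            rw [show (0:ℤ)+1 = 1 by norm_num]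
            exact v01 v (v_two_le v) hϖ.le
      have he0 : r^2 + b*r + a*c ≠ 0 := v_ne_zero' v heval
      have hu₁o : v (r/c) ≤ ev 0 := by
        have h := v_div_le v hro hc
        rwa [show (0:ℤ)-0 = 0 by norm_num] at h
      have hu₂o : v ((-b-r)/c) ≤ ev 0 := by
        have hb' : v (-b-r) ≤ ev 0 := by
          rw [show -b-r = -(b+r) by ring, v.map_neg]
          exact v_add_le v hbo hro
        have h := v_div_le v hb' hc
        rwa [show (0:ℤ)-0 = 0 by norm_num] at h
      have hd12 : v (r/c - (-b-r)/c) = ev 0 := by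
        rw [div_sub_div_same, show r - (-b-r) = 2*r+b by ring]
        have h := v_div_val v hδu hc
        rwa [show (0:ℤ)-0 = 0 by norm_num] at h
      have hne12 : (r/c : F) ≠ (-b-r)/c := by
        intro h
        rw [h, sub_self, v.map_zero] at hd12
        exact (ev_ne_zero 0) hd12.symm
      obtain ⟨R₁, hcard₁, hmem₁, hb₁, hrep₁, hkeep₁⟩ := reps_adapt v hRb hRrep hu₁o
      obtain ⟨R₂, hcard₂, hmem₂, hb₂, hrep₂, hkeep₂⟩ := reps_adapt v hb₁ hrep₁ hu₂o
      have hmem₁₂ : (r/c : F) ∈ R₂ := by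
        apply hkeep₂ _ hmem₁
        rw [hd12]
        rw [ev_le_iff]
        omega
      have hcardR₂ : R₂.card = q := by rw [hcard₂, hcard₁, hRcard]
      -- the pair relation
      have hk2 : !![-((r^2+b*r+a*c)/(c*ϖ)), 0; 0, c] ∈ Iwahori v := by
        apply mem_iwahori_s13 v
        · rw [v.map_neg]
          have h := v_div_val v heval (v_mul_val v hc hϖ)
          rw [show (1:ℤ)-(0+1) = 0 by norm_num] at h
          exact h.le
        · exact v_zero_le v
        · exact v_zero_le v
        · exact hc.le
        · rw [show -((r^2+b*r+a*c)/(c*ϖ)) * c - 0 * 0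
              = -((r^2+b*r+a*c)/ϖ) by field_simp; ring]
          rw [v.map_neg]
          have h := v_div_val v heval hϖ
          rwa [show (1:ℤ)-1 = 0 by norm_num] at h
      have hrel2 := relS v χ B hE' he0 hk2 (idI2 hc0 hπ0 rfl) (by ring)
      have hA2 := hA !![1,0;(-b-r)/c,1]
      have hmulipe : χ (1/(r^2+b*r+a*c)) * χ ϖ = 1 := by
        rw [← hχmul _ _ (one_div_ne_zero he0) hπ0]
        apply hχtriv
        rw [one_div]
        have h := v_mul_val v (v_inv_val v heval) hϖ
        rwa [show (-1)+1 = (0:ℤ) by norm_num] at h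
      have hpair : B !![1,0;r/c,1] + B !![1,0;(-b-r)/c,1] = 0 := by
        rw [hrel2, hA2]
        linear_combination (-(B !![1,0;(-b-r)/c,1])) * hmulipe
      -- the sum
      have hsum := hN R₂ hb₂ hrep₂ 1
      simp only [one_mul] at hsum
      rw [← Finset.add_sum_erase _ _ hmem₁₂] at hsum
      have hmem₂' : ((-b-r)/c : F) ∈ R₂.erase (r/c) :=
        Finset.mem_erase.mpr ⟨fun h => hne12 h.symm, hmem₂⟩
      rw [← Finset.add_sum_erase _ _ hmem₂'] at hsum
      have hgen : ∀ u ∈ (R₂.erase (r/c)).erase ((-b-r)/c),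
          B !![1,0;u,1] = B (wmat F) := by
        intro u hu
        obtain ⟨hne2, hu'⟩ := Finset.mem_erase.mp hu
        obtain ⟨hne1, huR⟩ := Finset.mem_erase.mp hu'
        refine (L1 u (hb₂ u huR) ?_).symm
        rw [show (c*u)^2 + b*(c*u) + a*c
            = (c*u - r)*((c*u) - (-b-r)) + (r^2 + b*r + a*c) by ring]
        apply v_add_dom v
        · have h1 : c*u - r = c * (u - r/c) := by rw [mul_sub, mul_div_self' hc0]
          have h2 : (c*u) - (-b-r) = c * (u - (-b-r)/c) := by
            rw [mul_sub, mul_div_self' hc0]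
          rw [h1, h2]
          exact vUU v (vUU v hc (reps_distinct v hb₂ hrep₂ huR hmem₁₂ hne1))
            (vUU v hc (reps_distinct v hb₂ hrep₂ huR hmem₂ hne2))
        · rw [show (0:ℤ)+1 = 1 by norm_num]
          exact heval.le
      rw [Finset.sum_congr rfl hgen, Finset.sum_const] at hsum
      have hcard' : ((R₂.erase (r/c)).erase ((-b-r)/c)).card = q - 2 := by
        rw [Finset.card_erase_of_mem hmem₂', Finset.card_erase_of_mem hmem₁₂, hcardR₂]
        omega
      rw [hcard', nsmul_eq_mul, hcast2] at hsum
      have hfin : ((q:ℂ) - 1) * B (wmat F) = 0 := by linear_combination hsum - hpair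
      have hq1 : (q:ℂ) - 1 ≠ 0 :=
        sub_ne_zero.mpr (by exact_mod_cast (by omega : q ≠ 1))
      exact (mul_eq_zero.mp hfin).resolve_left hq1
    · -- CASE R : residually a double root
      have hδ1 : v (2*r0 + b) ≤ ev 1 := by
        by_contra hcon
        exact hδS (ev_gap (by norm_num)
          (v_add_le v (v00 v (v_two_le v) hr0o) hbo) hcon)
      have hu₁o : v (r0/c) ≤ ev 0 := by
        have h := v_div_le v hr0o hc
        rwa [show (0:ℤ)-0 = 0 by norm_num] at h
      obtain ⟨R₁, hcard₁, hmem₁, hb₁, hrep₁, _⟩ := reps_adapt v hRb hRrep hu₁o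
      have hcardR₁ : R₁.card = q := by rw [hcard₁, hRcard]
      have hgen : ∀ u ∈ R₁.erase (r0/c), B !![1,0;u,1] = B (wmat F) := by
        intro u hu
        obtain ⟨hne1, huR⟩ := Finset.mem_erase.mp hu
        refine (L1 u (hb₁ u huR) ?_).symm
        rw [show (c*u)^2 + b*(c*u) + a*c
            = (c*u - r0)^2 + ((2*r0+b)*(c*u - r0) + (r0^2 + b*r0 + a*c)) by ring]
        have hcu : v (c*u - r0) = ev 0 := by
          rw [show c*u - r0 = c * (u - r0/c) by rw [mul_sub, mul_div_self' hc0]]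
          exact vUU v hc (reps_distinct v hb₁ hrep₁ huR hmem₁ hne1)
        apply v_add_dom v
        · have h := v_sq_val v hcu
          rwa [show (0:ℤ)+0 = 0 by norm_num] at h
        · rw [show (0:ℤ)+1 = 1 by norm_num]
          exact v_add_le v (v10 v hδ1 hcu.le) hr0Q
      have hsum := hN R₁ hb₁ hrep₁ 1
      simp only [one_mul] at hsum
      rw [← Finset.add_sum_erase _ _ hmem₁, Finset.sum_congr rfl hgen, Finset.sum_const,
        Finset.card_erase_of_mem hmem₁, hcardR₁, nsmul_eq_mul, hcast1] at hsum
      have hcommon : B !![1,0;r0/c,1] = -(q:ℂ) * B (wmat F) := by linear_combination hsum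
      by_cases hE1 : v (r0^2 + b*r0 + a*c) = ev 1
      · -- CASE R1 : "ramified", exact valuation one
        have he0 : r0^2 + b*r0 + a*c ≠ 0 := v_ne_zero' v hE1
        have hp₁ : v ((r0^2 + b*r0 + a*c)/(c*ϖ)) = ev 0 := by
          have h := v_div_val v hE1 (v_mul_val v hc hϖ)
          rwa [show (1:ℤ)-(0+1) = 0 by norm_num] at h
        have hbr : v (-b - r0) ≤ ev 0 := by
          rw [show -b-r0 = -(b+r0) by ring, v.map_neg]
          exact v_add_le v hbo hr0o
        -- FW : all forward edges at the next vertex are equivalent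
        have hFW : ∀ u : F, v u = ev 0 →
            B ((!![1,0;r0/c,1] * !![0,1;ϖ,0]) * wmat F)
              = B ((!![1,0;r0/c,1] * !![0,1;ϖ,0]) * !![1,0;u,1]) := by
          intro u hu
          set x₀ : F := -(u*(r0^2 + b*r0 + a*c)/(c*ϖ)) - r0 with hx₀def
          have hm' : v (u*(r0^2 + b*r0 + a*c)/(c*ϖ)) = ev 0 := by
            rw [mul_div_assoc]
            exact vUU v hu hp₁
          have hx₀o : v x₀ ≤ ev 0 := by
            rw [hx₀def]
            apply v_sub_le v _ hr0o
            rw [v.map_neg]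
            exact hm'.le
          have hNv : v (x₀^2 - b*x₀ + a*c) = ev 0 := by
            rw [show x₀^2 - b*x₀ + a*c
                = (u*(r0^2 + b*r0 + a*c)/(c*ϖ))^2
                  + ((2*r0+b)*(u*(r0^2 + b*r0 + a*c)/(c*ϖ)) + (r0^2 + b*r0 + a*c))
                by rw [hx₀def]; ring]
            apply v_add_dom v
            · have h := v_sq_val v hm'
              rwa [show (0:ℤ)+0 = 0 by norm_num] at h
            · rw [show (0:ℤ)+1 = 1 by norm_num]
              exact v_add_le v (v10 v hδ1 hm'.le) hE1.le
          have hN0 := v_ne_zero' v hNv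
          have hp₂ : v (x₀ + (-b - r0)) ≤ ev 0 := v_add_le v hx₀o hbr
          have hp₃ : v (c*ϖ - u*(x₀ + (-b - r0))) = ev 0 := by
            rw [show c*ϖ - u*(x₀ + (-b - r0))
                = u*(u*(r0^2 + b*r0 + a*c)/(c*ϖ)) + (u*(2*r0+b) + c*ϖ)
                by rw [hx₀def]; ring]
            apply v_add_dom v (vUU v hu hm')
            rw [show (0:ℤ)+1 = 1 by norm_num]
            exact v_add_le v (v01 v hu.le hδ1) (v_mul_val v hc hϖ).le
          have hk3 : !![(r0^2 + b*r0 + a*c)/(c*ϖ), x₀+(-b-r0); 0,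
              c*ϖ - u*(x₀+(-b-r0))] ∈ Iwahori v := by
            apply mem_iwahori_s13 v hp₁.le hp₂ (v_zero_le v) hp₃.le
            rw [mul_zero, sub_zero]
            exact vUU v hp₁ hp₃
          have hrel := relS v χ B hE' hN0 hk3 (idI3 hc0 hπ0 rfl hx₀def rfl) (by ring)
          rw [hrel, hχN hNv, one_mul]
        -- the relation at the next vertex
        obtain ⟨R₀, hcard₀, hmem₀, hb₀, hrep₀, _⟩ := reps_adapt v hRb hRrep (v_zero_le v)
        have hcardR₀ : R₀.card = q := by rw [hcard₀, hRcard]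
        have hsum₀ := hN R₀ hb₀ hrep₀ (!![1,0;r0/c,1] * !![0,1;ϖ,0])
        rw [← Finset.add_sum_erase _ _ hmem₀] at hsum₀
        have hgen₀ : ∀ u ∈ R₀.erase 0,
            B ((!![1,0;r0/c,1] * !![0,1;ϖ,0]) * !![1,0;u,1])
              = B ((!![1,0;r0/c,1] * !![0,1;ϖ,0]) * wmat F) := by
          intro u hu
          obtain ⟨hne0, huR⟩ := Finset.mem_erase.mp hu
          have hvu : v u = ev 0 := by
            have h := reps_distinct v hb₀ hrep₀ huR hmem₀ hne0
            rwa [sub_zero] at h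
          exact (hFW u hvu).symm
        rw [Finset.sum_congr rfl hgen₀, Finset.sum_const,
          Finset.card_erase_of_mem hmem₀, hcardR₀, nsmul_eq_mul, hcast1,
          show (!![1,0;(0:F),1] : Matrix (Fin 2) (Fin 2) F) = 1 from
            Matrix.one_fin_two.symm, mul_one] at hsum₀
        have hAn := hA !![1,0;r0/c,1]
        have h1 : B (!![1,0;r0/c,1] * !![0,1;ϖ,0]) = (q:ℂ) * (χ ϖ * B (wmat F)) := by
          rw [hAn, hcommon]; ring
        have hg₁w : B ((!![1,0;r0/c,1] * !![0,1;ϖ,0]) * wmat F)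
            = -(χ ϖ) * B (wmat F) := by
          apply mul_left_cancel₀ hqC
          linear_combination hsum₀ - h1
        -- the direct relation via the torus element of valuation one
        have hnorm4 : (-r0)^2 - b*(-r0)*1 + a*c*1^2 = r0^2 + b*r0 + a*c := by ring
        have hnorm40 : (-r0)^2 - b*(-r0)*1 + a*c*1^2 ≠ 0 := by rw [hnorm4]; exact he0
        have hχe : χ (r0^2 + b*r0 + a*c) = χ ϖ := by
          rw [show r0^2 + b*r0 + a*c = ϖ * ((r0^2 + b*r0 + a*c)/ϖ) by field_simp,
            hχmul ϖ _ hπ0 (div_ne_zero he0 hπ0)]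
          rw [hχtriv ((r0^2 + b*r0 + a*c)/ϖ) ?_, mul_one]
          have h := v_div_val v hE1 hϖ
          rwa [show (1:ℤ)-1 = 0 by norm_num] at h
        have hdir : B ((!![1,0;r0/c,1] * !![0,1;ϖ,0]) * wmat F)
            = χ ϖ * B (wmat F) := by
          by_cases hδ2 : v (2*r0+b) ≤ ev 2
          · -- subcase : δ ∈ 𝔭²
            have hk5 : !![((r0^2+b*r0+a*c) - (2*r0+b)*r0)/(c*(r0^2+b*r0+a*c)),
                r0*ϖ/(r0^2+b*r0+a*c); (2*r0+b)/(r0^2+b*r0+a*c),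
                -(c*ϖ/(r0^2+b*r0+a*c))] ∈ Iwahori v := by
              apply mem_iwahori_s13 v
              · have h := v_div_le v
                  (v_sub_le v hE1.le (v10 v hδ1 hr0o))
                  (v_mul_val v hc hE1)
                rwa [show (1:ℤ)-(0+1) = 0 by norm_num] at h
              · have h := v_div_le v (v01 v hr0o hϖ.le) hE1
                rwa [show (1:ℤ)-1 = 0 by norm_num] at h
              · have h := v_div_le v hδ2 hE1
                rwa [show (2:ℤ)-1 = 1 by norm_num] at h
              · rw [v.map_neg]
                have h := v_div_val v (v_mul_val v hc hϖ) hE1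
                rw [show (0:ℤ)+1-1 = 0 by norm_num] at h
                exact h.le
              · rw [show ((r0^2+b*r0+a*c) - (2*r0+b)*r0)/(c*(r0^2+b*r0+a*c))
                    * (-(c*ϖ/(r0^2+b*r0+a*c)))
                    - r0*ϖ/(r0^2+b*r0+a*c) * ((2*r0+b)/(r0^2+b*r0+a*c))
                    = -(ϖ/(r0^2+b*r0+a*c)) by
                      generalize r0^2+b*r0+a*c = E at he0 ⊢; field_simp; ring]
                rw [v.map_neg]
                have h := v_div_val v hϖ hE1
                rwa [show (1:ℤ)-1 = 0 by norm_num] at h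
            have hrelA := relU v χ B hE' hnorm40 hk5 (idI4a hc0 hπ0 he0 rfl rfl)
            rw [hrelA, hnorm4, hχe]
          · -- subcase : δ of valuation exactly one
            have hδe : v (2*r0+b) = ev 1 := ev_gap (by norm_num) hδ1 hδ2
            have hδ0 : (2*r0+b) ≠ 0 := v_ne_zero' v hδe
            have hu' : v (-(c*ϖ)/(2*r0+b)) = ev 0 := by
              have h := v_div_val v (by rw [v.map_neg]; exact v_mul_val v hc hϖ) hδe
              rwa [show (0:ℤ)+1-1 = 0 by norm_num] at h
            have hk6 : !![ϖ/(2*r0+b),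
                ((2*r0+b)*r0 - (r0^2+b*r0+a*c))/(c*(r0^2+b*r0+a*c)); 0,
                -((2*r0+b)/(r0^2+b*r0+a*c))] ∈ Iwahori v := by
              apply mem_iwahori_s13 v
              · have h := v_div_val v hϖ hδe
                rw [show (1:ℤ)-1 = 0 by norm_num] at h
                exact h.le
              · have h := v_div_le v
                  (v_sub_le v (v10 v hδ1 hr0o) hE1.le)
                  (v_mul_val v hc hE1)
                rwa [show (1:ℤ)-(0+1) = 0 by norm_num] at h
              · exact v_zero_le v
              · rw [v.map_neg]
                have h := v_div_val v hδe hE1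
                rw [show (1:ℤ)-1 = 0 by norm_num] at h
                exact h.le
              · rw [show ϖ/(2*r0+b) * (-((2*r0+b)/(r0^2+b*r0+a*c)))
                    - ((2*r0+b)*r0 - (r0^2+b*r0+a*c))/(c*(r0^2+b*r0+a*c)) * 0
                    = -(ϖ/(r0^2+b*r0+a*c)) by field_simp; ring]
                rw [v.map_neg]
                have h := v_div_val v hϖ hE1
                rwa [show (1:ℤ)-1 = 0 by norm_num] at h
            have hrelB := relU v χ B hE' hnorm40 hk6 (idI4b hc0 hπ0 he0 hδ0 rfl rfl)
            rw [hFW _ hu', hrelB, hnorm4, hχe]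
        have h2 : (2:ℂ) * (χ ϖ * B (wmat F)) = 0 := by
          linear_combination hg₁w - hdir
        rcases mul_eq_zero.mp h2 with h | h
        · exact absurd h two_ne_zero
        · exact (mul_eq_zero.mp h).resolve_left hχϖ
      · -- CASE R2 : descent to a smaller discriminant
        have he2 : v (r0^2 + b*r0 + a*c) ≤ ev 2 := by
          by_contra hcon
          exact hE1 (ev_gap (by norm_num) hr0Q hcon)
        have hn2 : 2 ≤ n := by
          have hb1 : v (b^2 - 4*(a*c)) ≤ ev 2 := by
            rw [show b^2 - 4*(a*c) = (2*r0+b)^2 - 4*(r0^2 + b*r0 + a*c) by ring]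
            apply v_sub_le v
            · have h := v_sq_le v hδ1
              rwa [show (1:ℤ)+1 = 2 by norm_num] at h
            · have h := v_mul_le v (v_four_le v) he2
              rwa [show (0:ℤ)+2 = 2 by norm_num] at h
          rw [hvd] at hb1
          have := (ev_le_iff _ _).mp hb1
          omega
        have hϖ2 : v (ϖ^2) = ev 2 := by
          have h := v_sq_val v hϖ
          rwa [show (1:ℤ)+1 = 2 by norm_num] at h
        have hϖ2ne : (ϖ^2 : F) ≠ 0 := pow_ne_zero 2 hπ0
        have hdisc : ((2*r0+b)/ϖ)^2 - 4*((r0^2 + b*r0 + a*c)/(c*ϖ^2)*c)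
            = (b^2 - 4*(a*c))/ϖ^2 := by
          field_simp
          ring
        have ha2 : v ((r0^2 + b*r0 + a*c)/(c*ϖ^2)) ≤ ev 0 := by
          have h := v_div_le v he2 (v_mul_val v hc hϖ2)
          rwa [show (2:ℤ)-(0+2) = 0 by norm_num] at h
        have hb2 : v ((2*r0+b)/ϖ) ≤ ev 0 := by
          have h := v_div_le v hδ1 hϖ
          rwa [show (1:ℤ)-1 = 0 by norm_num] at h
        have hns2 : ∀ s : F, s^2 ≠ ((2*r0+b)/ϖ)^2 - 4*((r0^2 + b*r0 + a*c)/(c*ϖ^2)*c) := by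
          intro s hs
          apply hnonsq (s*ϖ)
          rw [show (s*ϖ)^2 = s^2 * ϖ^2 by ring, hs, hdisc]
          field_simp
        have hvd2 : v (((2*r0+b)/ϖ)^2 - 4*((r0^2 + b*r0 + a*c)/(c*ϖ^2)*c))
            = ev ((n-2 : ℕ) : ℤ) := by
          rw [hdisc]
          have h := v_div_val v hvd hϖ2
          rw [h, ev_inj]
          omega
        have hE2 : ∀ t g k, t ∈ TSet ((r0^2 + b*r0 + a*c)/(c*ϖ^2)) ((2*r0+b)/ϖ) c →
            k ∈ Iwahori v →
            B (!![(1:F), 0; r0/c, ϖ] * (t * g * k))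
              = χ t.det * B (!![(1:F), 0; r0/c, ϖ] * g) := by
          rintro t g k ⟨x₃, y₃, hnorm₃, rfl⟩ hk
          have hswap : !![(1:F), 0; r0/c, ϖ]
                * tmat ((r0^2 + b*r0 + a*c)/(c*ϖ^2)) ((2*r0+b)/ϖ) c x₃ y₃
              = tmat a b c (x₃ - r0*y₃/ϖ) (y₃/ϖ) * !![(1:F), 0; r0/c, ϖ] :=
            idI5 hc0 hπ0 rfl rfl
          have hnormτ : (x₃ - r0*y₃/ϖ)^2 - b*(x₃ - r0*y₃/ϖ)*(y₃/ϖ) + a*c*(y₃/ϖ)^2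
              = x₃^2 - ((2*r0+b)/ϖ)*x₃*y₃ + ((r0^2 + b*r0 + a*c)/(c*ϖ^2))*c*y₃^2 :=
            normI5 hc0 hπ0 rfl rfl
          rw [show !![(1:F), 0; r0/c, ϖ]
              * (tmat ((r0^2 + b*r0 + a*c)/(c*ϖ^2)) ((2*r0+b)/ϖ) c x₃ y₃ * g * k)
              = tmat a b c (x₃ - r0*y₃/ϖ) (y₃/ϖ)
                  * (!![(1:F), 0; r0/c, ϖ] * g) * k by
            rw [← mul_assoc, ← mul_assoc, hswap, mul_assoc
              (tmat a b c (x₃ - r0*y₃/ϖ) (y₃/ϖ))]]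
          rw [relU v χ B hE' (by rw [hnormτ]; exact hnorm₃) hk rfl]
          rw [det_tmat, ← hnormτ]
        have hN2 : ∀ R' : Finset F, (∀ r ∈ R', v r ≤ ev 0) →
            (∀ x : F, v x ≤ ev 0 → ∃! r, r ∈ R' ∧ v (x - r) ≤ ev 1) →
            ∀ g, (∑ u ∈ R', B (!![(1:F), 0; r0/c, ϖ] * (g * !![1, 0; u, 1])))
              = - B (!![(1:F), 0; r0/c, ϖ] * (g * wmat F)) := by
          intro R' hb' hrep' g
          have h := hN R' hb' hrep' (!![(1:F), 0; r0/c, ϖ] * g)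
          simpa only [mul_assoc] using h
        have hA2 : ∀ g, B (!![(1:F), 0; r0/c, ϖ] * (g * !![0, 1; ϖ, 0]))
            = -(χ ϖ) * B (!![(1:F), 0; r0/c, ϖ] * g) := by
          intro g
          have h := hA (!![(1:F), 0; r0/c, ϖ] * g)
          simpa only [mul_assoc] using h
        have hIH := IH (n-2) (by omega) ((r0^2 + b*r0 + a*c)/(c*ϖ^2)) ((2*r0+b)/ϖ) c
          ha2 hb2 hc hns2 hvd2 (fun g => B (!![(1:F), 0; r0/c, ϖ] * g)) hE2 hN2 hA2
        -- transport the conclusion back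
        have hone : tmat a b c 1 0 * (!![1,0;r0/c,1] * !![0,1;ϖ,0]) * !![(-1:F),0;0,1]
            = !![(1:F), 0; r0/c, ϖ] * wmat F := by
          rw [tmat_one, one_mul, idI6]
        have hkI : (!![(-1:F),0;0,1] : Matrix (Fin 2) (Fin 2) F) ∈ Iwahori v := by
          apply mem_iwahori_s13 v
          · rw [v.map_neg]; exact (v_one' v).le
          · exact v_zero_le v
          · exact v_zero_le v
          · exact (v_one' v).le
          · rw [show (-1:F) * 1 - 0 * 0 = -1 by ring, v.map_neg]
            exact v_one' v
        have hnorm1 : (1:F)^2 - b*1*0 + a*c*0^2 ≠ 0 := by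
          rw [show (1:F)^2 - b*1*0 + a*c*0^2 = 1 by ring]
          exact one_ne_zero
        have hrel1 := relU v χ B hE' hnorm1 hkI hone
        have hχ1 : χ ((1:F)^2 - b*1*0 + a*c*0^2) = 1 := by
          rw [show (1:F)^2 - b*1*0 + a*c*0^2 = 1 by ring]
          exact hχtriv 1 (v_one' v)
        have hIH' : B (!![(1:F), 0; r0/c, ϖ] * wmat F) = 0 := hIH
        rw [hIH', hχ1, one_mul] at hrel1
        have hAn := hA !![1,0;r0/c,1]
        have hfin : (q:ℂ) * (χ ϖ * B (wmat F)) = 0 := by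
          rw [hAn, hcommon] at hrel1
          linear_combination -hrel1
        rcases mul_eq_zero.mp hfin with h | h
        · exact absurd h hqC
        · exact (mul_eq_zero.mp h).resolve_left hχϖ
  · -- CASE A : no residual root
    push_neg at hroot
    have hQu : ∀ z : F, v z ≤ ev 0 → v (z^2 + b*z + a*c) = ev 0 := by
      intro z hz
      refine ev_gap (m := 0) (n := 1) (by norm_num) ?_ (not_le.mpr (hroot z hz))
      exact v_add_le v (v_add_le v (v_sq00 v hz) (v00 v hbo hz)) (v00 v hao hc.le)
    have hall : ∀ u ∈ R, B !![1,0;u,1] = B (wmat F) :=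
      fun u hu => (L1 u (hRb u hu) (hQu (c*u) (v00 v hc.le (hRb u hu)))).symm
    have hsum := hN R hRb hRrep 1
    simp only [one_mul] at hsum
    rw [Finset.sum_congr rfl hall, Finset.sum_const, hRcard, nsmul_eq_mul] at hsum
    have h0 : ((q:ℂ) + 1) * B (wmat F) = 0 := by rw [add_mul, one_mul, hsum]; ring
    rcases mul_eq_zero.mp h0 with h | h
    · exact absurd h (Nat.cast_add_one_ne_zero q)
    · exact h

/-- if Ω(t) = χ(det t) (so c(Ω) = 0), then B(w) = 0. -/
theorem stmt13
    (v : Valuation F Zm0) (ϖ : F) (hϖ : v ϖ = ev 1)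
    (a b c : F)
    (hao : v a ≤ ev 0) (hbo : v b ≤ ev 0) (hc : v c = ev 0)
    (hd0 : b ^ 2 - 4 * (a * c) ≠ 0)
    (hnonsq : ∀ s : F, s ^ 2 ≠ b ^ 2 - 4 * (a * c))
    -- q is the cardinality of the residue field 𝔬/𝔭 :
    (q : ℕ) (hq : ∃ R : Finset F, R.card = q ∧ (∀ r ∈ R, v r ≤ ev 0) ∧
      ∀ x : F, v x ≤ ev 0 → ∃! r, r ∈ R ∧ v (x - r) ≤ ev 1)
    -- χ : F^× → ℂ^× a homomorphism trivial on 𝔬^× :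
    (χ : F → ℂ)
    (hχmul : ∀ x y : F, x ≠ 0 → y ≠ 0 → χ (x * y) = χ x * χ y)
    (hχne : ∀ x : F, x ≠ 0 → χ x ≠ 0)
    (hχtriv : ∀ u : F, v u = ev 0 → χ u = 1)
    -- Ω is the homomorphism t ↦ χ(det t) on T(F) :
    (Ω : Matrix (Fin 2) (Fin 2) F → ℂ)
    (hΩdef : ∀ t ∈ TSet a b c, Ω t = χ t.det)
    (B : Matrix (Fin 2) (Fin 2) F → ℂ)
    -- (E) equivariance :
    (hE : ∀ t g k, t ∈ TSet a b c → k ∈ Iwahori v → B (t * g * k) = Ω t * B g)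
    -- (N) summing over any set of representatives of 𝔬/𝔭 :
    (hN : ∀ R : Finset F, (∀ r ∈ R, v r ≤ ev 0) →
      (∀ x : F, v x ≤ ev 0 → ∃! r, r ∈ R ∧ v (x - r) ≤ ev 1) →
      ∀ g, (∑ u ∈ R, B (g * !![1, 0; u, 1])) = - B (g * wmat F))
    -- (A) Atkin–Lehner eigenvector property :
    (hA : ∀ g, B (g * !![0, 1; ϖ, 0]) = -(χ ϖ) * B g) :
    B (wmat F) = 0 := by
  obtain ⟨R, hRcard, hRb, hRrep⟩ := hq
  -- the discriminant is integral and nonzero, so its valuation is `ev n` for some `n : ℕ`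
  have hdo : v (b ^ 2 - 4 * (a * c)) ≤ ev 0 := by
    apply v_sub_le v
    · exact v_sq00 v hbo
    · exact v00 v (v_four_le v) (v00 v hao hc.le)
  have hdne : v (b ^ 2 - 4 * (a * c)) ≠ 0 := by
    intro h
    exact hd0 ((Valuation.zero_iff v).mp h)
  obtain ⟨m, hm⟩ := exists_ev hdne
  have hm0 : 0 ≤ m := by
    rw [hm] at hdo
    exact (ev_le_iff m 0).mp hdo
  have hE' : ∀ t g k, t ∈ TSet a b c → k ∈ Iwahori v → B (t * g * k) = χ t.det * B g := by
    intro t g k ht hk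
    rw [hE t g k ht hk, hΩdef t ht]
  have hvd : v (b ^ 2 - 4 * (a * c)) = ev (m.toNat : ℕ) := by
    rw [hm]; congr 1; omega
  exact aux v ϖ hϖ q R hRcard hRb hRrep χ hχmul hχne hχtriv m.toNat a b c hao hbo hc
    hnonsq hvd B hE' hN hA
end
end
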